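/- Let Φ ∈ ℝ^{N×m} satisfy ΦᵀΦ = I_m, let p'': ℝ → ℝ be Lipschitz with constant L, and define H(α) = ΘᵀΘ + λ Φᵀ D(Φα) Φ where D(u) is the diagonal matrix with D(u)ᵢᵢ = p''(uᵢ), Θ ∈ ℝ^{r×m}, and λ > 0. Then H is Lipschitz continuous in the operator norm with constant λL: ‖H(α) − H(β)‖₂ ≤ λL·|α − β| for all α, β ∈ ℝ^m. -/

import Mathlib

open Matrix
open scoped Matrix.Norms.L2Operator

lemma diag_norm_le {m : ℕ} (d : Fin m → ℝ) (C : ℝ) (hC : 0 ≤ C) (hd : ∀ i, |d i| ≤ C) :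
    ‖Matrix.diagonal d‖ ≤ C := by
  rw [Matrix.l2_opNorm_def]
  apply ContinuousLinearMap.opNorm_le_bound _ hC
  intro x
  rw [EuclideanSpace.norm_eq, EuclideanSpace.norm_eq]
  calc Real.sqrt (∑ i, ‖(toEuclideanLin (Matrix.diagonal d) x) i‖ ^ 2)
      ≤ Real.sqrt (∑ i, C ^ 2 * ‖x i‖ ^ 2) := by
        apply Real.sqrt_le_sqrt
        apply Finset.sum_le_sum
        intro i _
        have h1 : (toEuclideanLin (Matrix.diagonal d)) x i = d i * x i := by
          simp [toEuclideanLin, Matrix.mulVec_diagonal]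
        rw [h1]
        have h2 : ‖d i * x i‖ = |d i| * ‖x i‖ := by
          simp [abs_mul, Real.norm_eq_abs]
        rw [h2, mul_pow]
        exact mul_le_mul_of_nonneg_right (pow_le_pow_left₀ (abs_nonneg _) (hd i) 2) (by positivity)
    _ = C * Real.sqrt (∑ i, ‖x i‖ ^ 2) := by
        rw [← Finset.mul_sum, Real.sqrt_mul (by positivity), Real.sqrt_sq hC]

lemma coord_le_norm {m : ℕ} (y : EuclideanSpace ℝ (Fin m)) (i : Fin m) : |y i| ≤ ‖y‖ := by
  rw [EuclideanSpace.norm_eq]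
  have h := Finset.single_le_sum (f := fun j => ‖y j‖ ^ 2)
    (fun j _ => by positivity) (Finset.mem_univ i)
  calc |y i| = Real.sqrt (‖y i‖ ^ 2) := by
        rw [Real.sqrt_sq_eq_abs]; simp [Real.norm_eq_abs]
    _ ≤ _ := Real.sqrt_le_sqrt h


/-- The Hessian `H(α) = ΘᵀΘ + λ Φᵀ D(Φα) Φ` of the penalized C-DEIM cost, where
`D(u)ᵢᵢ = p''(uᵢ)` and `p''` is Lipschitz with constant `L`, is Lipschitz in the
operator norm with constant `λL`. -/
theorem hessian_lipschitz
    {N r m : ℕ}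
    (Φ : Matrix (Fin N) (Fin m) ℝ) (hΦ : Φᵀ * Φ = 1)
    (Θ : Matrix (Fin r) (Fin m) ℝ)
    (p'' : ℝ → ℝ) (L : ℝ) (hLip : ∀ x y : ℝ, |p'' x - p'' y| ≤ L * |x - y|)
    (lam : ℝ) (hlam : 0 < lam) :
    ∀ α β : EuclideanSpace ℝ (Fin m),
      ‖(Θᵀ * Θ + lam • (Φᵀ * Matrix.diagonal (fun i => p'' (Matrix.toEuclideanLin Φ α i)) * Φ))
        - (Θᵀ * Θ + lam • (Φᵀ * Matrix.diagonal (fun i => p'' (Matrix.toEuclideanLin Φ β i)) * Φ))‖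
        ≤ lam * L * ‖α - β‖ := by
  intro α β
  -- basic facts
  have hL0 : 0 ≤ L := by
    have h := hLip 0 1
    simp at h
    exact le_trans (abs_nonneg _) h
  have hΦH : Φᴴ = Φᵀ := by ext i j; simp [Matrix.conjTranspose]
  have hone : ‖(1 : Matrix (Fin m) (Fin m) ℝ)‖ ≤ 1 := by
    rw [Matrix.cstar_norm_def, _root_.map_one]
    exact ContinuousLinearMap.norm_id_le
  have hΦnorm : ‖Φ‖ ≤ 1 := by
    have h := Matrix.l2_opNorm_conjTranspose_mul_self Φ
    rw [hΦH, hΦ] at h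
    nlinarith [norm_nonneg Φ, hone]
  -- coordinate bound
  have hcoord : ∀ i, |Matrix.toEuclideanLin Φ α i - Matrix.toEuclideanLin Φ β i| ≤ ‖α - β‖ := by
    intro i
    have h1 : Matrix.toEuclideanLin Φ α i - Matrix.toEuclideanLin Φ β i
        = Matrix.toEuclideanLin Φ (α - β) i := by
      rw [map_sub]; rfl
    rw [h1]
    refine le_trans (coord_le_norm _ i) ?_
    have h2 : ‖Matrix.toEuclideanLin Φ (α - β)‖ ≤ ‖Φ‖ * ‖α - β‖ :=
      ((Matrix.toEuclideanLin.trans LinearMap.toContinuousLinearMap) Φ).le_opNorm (α - β)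
    calc ‖Matrix.toEuclideanLin Φ (α - β)‖ ≤ ‖Φ‖ * ‖α - β‖ := h2
      _ ≤ 1 * ‖α - β‖ := by gcongr
      _ = ‖α - β‖ := one_mul _
  -- the matrix difference
  set d : Fin N → ℝ := fun i =>
    p'' (Matrix.toEuclideanLin Φ α i) - p'' (Matrix.toEuclideanLin Φ β i) with hd
  have hdiff :
      (Θᵀ * Θ + lam • (Φᵀ * Matrix.diagonal (fun i => p'' (Matrix.toEuclideanLin Φ α i)) * Φ))
        - (Θᵀ * Θ + lam • (Φᵀ * Matrix.diagonal (fun i => p'' (Matrix.toEuclideanLin Φ β i)) * Φ))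
      = lam • (Φᵀ * Matrix.diagonal d * Φ) := by
    rw [hd]
    rw [← Matrix.diagonal_sub]
    simp only [Matrix.mul_sub, Matrix.sub_mul, smul_sub]
    abel
  rw [hdiff]
  have hdbound : ∀ i, |d i| ≤ L * ‖α - β‖ := fun i =>
    le_trans (hLip _ _) (mul_le_mul_of_nonneg_left (hcoord i) hL0)
  have hD : ‖Matrix.diagonal d‖ ≤ L * ‖α - β‖ :=
    diag_norm_le d _ (by positivity) hdbound
  rw [norm_smul, Real.norm_eq_abs, abs_of_pos hlam]
  rw [mul_assoc]
  apply mul_le_mul_of_nonneg_left _ hlam.le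
  calc ‖Φᵀ * Matrix.diagonal d * Φ‖
      ≤ ‖Φᵀ * Matrix.diagonal d‖ * ‖Φ‖ := Matrix.l2_opNorm_mul _ _
    _ ≤ ‖Φᵀ‖ * ‖Matrix.diagonal d‖ * ‖Φ‖ := by
        gcongr; exact Matrix.l2_opNorm_mul _ _
    _ ≤ 1 * (L * ‖α - β‖) * 1 := by
        have hT : ‖Φᵀ‖ ≤ 1 := by rw [← hΦH, Matrix.l2_opNorm_conjTranspose]; exact hΦnorm
        exact mul_le_mul (mul_le_mul hT hD (norm_nonneg _) (by norm_num))
          hΦnorm (norm_nonneg _) (by positivity)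
    _ = L * ‖α - β‖ := by ring
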